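/- arXiv:1908.08479 — 2 statements merged into one kernel-verified Lean document; each statement's English description precedes it below -/
import Mathlib

section
/- Let A : R^N -> R^m satisfy (1-δ)||v||^2 <= ||Av||^2 <= (1+δ)||v||^2 for all v in a set containing X^{j+1} - X, and suppose the quantities satisfy ||X^{j+1}-X||^2 <= 2⟨(I - A*A)(X^j - X), X^{j+1} - X⟩ + 2⟨z, A(X^{j+1}-X)⟩ + c^2, where additionally |⟨(I - A*A)u, w⟩| <= δ||u|| ||w|| for u = X^j - X, w = X^{j+1} - X. Then ||X^{j+1} - X|| <= 2δ||X^j - X|| + 2√(1+δ)||z|| + c. -/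
open scoped RealInnerProductSpace

lemma quadE (E a c : ℝ) (hE : 0 ≤ E) (ha : 0 ≤ a) (hc : 0 ≤ c)
    (h : E ^ 2 ≤ a * E + c ^ 2) : E ≤ a + c := by
  by_contra hcon
  push_neg at hcon
  nlinarith [mul_le_mul_of_nonneg_left (le_of_lt hcon) hc]

theorem stmt13 {N m : ℕ} (δ c : ℝ) (hδ : 0 ≤ δ) (hc : 0 ≤ c)
    (A : EuclideanSpace ℝ (Fin N) →L[ℝ] EuclideanSpace ℝ (Fin m))
    (X Xj Xj1 : EuclideanSpace ℝ (Fin N)) (z : EuclideanSpace ℝ (Fin m))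
    (hRIP : (1 - δ) * ‖Xj1 - X‖ ^ 2 ≤ ‖A (Xj1 - X)‖ ^ 2 ∧
      ‖A (Xj1 - X)‖ ^ 2 ≤ (1 + δ) * ‖Xj1 - X‖ ^ 2)
    (hmain : ‖Xj1 - X‖ ^ 2 ≤
      2 * ⟪(Xj - X) - ContinuousLinearMap.adjoint A (A (Xj - X)), Xj1 - X⟫
        + 2 * ⟪z, A (Xj1 - X)⟫ + c ^ 2)
    (hcross : |⟪(Xj - X) - ContinuousLinearMap.adjoint A (A (Xj - X)), Xj1 - X⟫|
      ≤ δ * ‖Xj - X‖ * ‖Xj1 - X‖) :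
    ‖Xj1 - X‖ ≤ 2 * δ * ‖Xj - X‖ + 2 * Real.sqrt (1 + δ) * ‖z‖ + c := by
  set E := ‖Xj1 - X‖ with hEdef
  set D := ‖Xj - X‖ with hDdef
  have hE : 0 ≤ E := norm_nonneg _
  have hD : 0 ≤ D := norm_nonneg _
  have h1 : ⟪(Xj - X) - ContinuousLinearMap.adjoint A (A (Xj - X)), Xj1 - X⟫ ≤ δ * D * E :=
    (le_abs_self _).trans hcross
  have hAw : ‖A (Xj1 - X)‖ ≤ Real.sqrt (1 + δ) * E := by
    have h := Real.sqrt_le_sqrt hRIP.2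
    rwa [Real.sqrt_sq (norm_nonneg _), Real.sqrt_mul (by linarith), Real.sqrt_sq hE] at h
  have h2 : ⟪z, A (Xj1 - X)⟫ ≤ ‖z‖ * (Real.sqrt (1 + δ) * E) :=
    (real_inner_le_norm _ _).trans (mul_le_mul_of_nonneg_left hAw (norm_nonneg _))
  have hsq : 0 ≤ Real.sqrt (1 + δ) := Real.sqrt_nonneg _
  have key : E ^ 2 ≤ (2 * δ * D + 2 * Real.sqrt (1 + δ) * ‖z‖) * E + c ^ 2 := by
    nlinarith
  exact quadE E _ c hE (by positivity) hc key
end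

section
/- Let X in S_{r,R} (unit Frobenius norm, CP-rank r with factors bounded by R), let A satisfy the TRIP: ||(A*A - I)Y||_F <= δ||Y||_F for all tensors Y of CP-rank at most 3r with appropriately bounded factors, with δ <= (1/2)2^{-n^α}, and let z satisfy ||z||_2 <= 2^{-0.5 n^α}/(2||A||). Suppose the iterates X^j have CP-rank at most r and satisfy ||X^j - X||_F <= ||X^0 - X||_F = ||X||_F = 1 and W^j = X^j + A*(AX + z - A X^j). Then ||W^j - X||_F^2 <= 2^{-n^α}. -/
/-- The `d`-order outer product `x₁ ⊗ ⋯ ⊗ x_d`, as a tensor with the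
Frobenius (Euclidean) norm. -/
noncomputable def outerD {d : ℕ} {n : Fin d → ℕ}
    (x : (i : Fin d) → EuclideanSpace ℝ (Fin (n i))) :
    EuclideanSpace ℝ ((i : Fin d) → Fin (n i)) :=
  (WithLp.equiv 2 _).symm (fun a => ∏ i, x i (a i))

/-- `T` is a sum of `r` rank-one tensors whose factors all have norm at most `R`. -/
def CPBounded {d : ℕ} {n : Fin d → ℕ} (r : ℕ) (R : ℝ)
    (T : EuclideanSpace ℝ ((i : Fin d) → Fin (n i))) : Prop :=
  ∃ x : Fin r → (i : Fin d) → EuclideanSpace ℝ (Fin (n i)),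
    (∀ k i, ‖x k i‖ ≤ R) ∧ T = ∑ k, outerD (x k)

lemma cpb_mono {d : ℕ} {n : Fin d → ℕ} {r : ℕ} {R R' : ℝ} (h : R ≤ R')
    {T : EuclideanSpace ℝ ((i : Fin d) → Fin (n i))}
    (hT : CPBounded r R T) : CPBounded r R' T := by
  obtain ⟨x, hx, rfl⟩ := hT
  exact ⟨x, fun k i => (hx k i).trans h, rfl⟩

lemma cpb_add {d : ℕ} {n : Fin d → ℕ} {r₁ r₂ : ℕ} {R : ℝ}
    {T₁ T₂ : EuclideanSpace ℝ ((i : Fin d) → Fin (n i))}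
    (h₁ : CPBounded r₁ R T₁) (h₂ : CPBounded r₂ R T₂) :
    CPBounded (r₁ + r₂) R (T₁ + T₂) := by
  obtain ⟨x, hx, rfl⟩ := h₁
  obtain ⟨y, hy, rfl⟩ := h₂
  refine ⟨Fin.addCases x y, fun k i => ?_, ?_⟩
  · induction k using Fin.addCases with
    | left k => simpa using hx k i
    | right k => simpa using hy k i
  · rw [Fin.sum_univ_add]
    simp

lemma outerD_update_neg {d : ℕ} {n : Fin d → ℕ} (i₀ : Fin d)
    (x : (i : Fin d) → EuclideanSpace ℝ (Fin (n i))) :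
    outerD (Function.update x i₀ (-(x i₀))) = -outerD x := by
  unfold outerD
  ext a
  simp only [WithLp.equiv_symm_apply, WithLp.ofLp_toLp, PiLp.neg_apply]
  rw [← Finset.mul_prod_erase Finset.univ _ (Finset.mem_univ i₀),
    ← Finset.mul_prod_erase Finset.univ (fun i => x i (a i)) (Finset.mem_univ i₀)]
  have h1 : Function.update x i₀ (-(x i₀)) i₀ (a i₀) = -(x i₀ (a i₀)) := by
    simp
  rw [h1]
  have h2 : ∀ j ∈ Finset.univ.erase i₀,
      Function.update x i₀ (-(x i₀)) j (a j) = x j (a j) := by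
    intro j hj
    rw [Function.update_of_ne (Finset.ne_of_mem_erase hj)]
  rw [Finset.prod_congr rfl h2]
  ring

lemma cpb_neg {d : ℕ} {n : Fin d → ℕ} {r : ℕ} {R : ℝ} (hd : d ≠ 0)
    {T : EuclideanSpace ℝ ((i : Fin d) → Fin (n i))}
    (hT : CPBounded r R T) : CPBounded r R (-T) := by
  obtain ⟨x, hx, rfl⟩ := hT
  have i₀ : Fin d := ⟨0, Nat.pos_of_ne_zero hd⟩
  refine ⟨fun k => Function.update (x k) i₀ (-(x k i₀)), fun k i => ?_, ?_⟩
  · show ‖Function.update (x k) i₀ (-(x k i₀)) i‖ ≤ R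
    rcases eq_or_ne i i₀ with rfl | h
    · simpa using hx k i
    · rw [Function.update_of_ne h]; exact hx k i
  · have h3 : ∀ k, outerD (Function.update (x k) i₀ (-(x k i₀))) = -outerD (x k) :=
      fun k => outerD_update_neg i₀ (x k)
    simp only [h3, Finset.sum_neg_distrib]

lemma cpb_zero {d : ℕ} {n : Fin d → ℕ} {r : ℕ} {R : ℝ} (hd : d ≠ 0) (hR : 0 ≤ R) :
    CPBounded (d := d) (n := n) r R 0 := by
  have i₀ : Fin d := ⟨0, Nat.pos_of_ne_zero hd⟩
  refine ⟨fun _ _ => 0, fun k i => by simpa using hR, ?_⟩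
  have : outerD (d := d) (n := n) (fun _ => 0) = 0 := by
    unfold outerD
    ext a
    simp only [WithLp.equiv_symm_apply, WithLp.ofLp_toLp, PiLp.zero_apply]
    exact Finset.prod_eq_zero (Finset.mem_univ i₀) (by simp)
  simp [this]

set_option maxHeartbeats 1000000 in
theorem stmt14 {d r m : ℕ} {n : Fin d → ℕ} (nn : ℕ) (α δ R R' : ℝ)
    (X Xj : EuclideanSpace ℝ ((i : Fin d) → Fin (n i)))
    (A : EuclideanSpace ℝ ((i : Fin d) → Fin (n i)) →L[ℝ] EuclideanSpace ℝ (Fin m))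
    (z : EuclideanSpace ℝ (Fin m))
    (hXnorm : ‖X‖ = 1) (hX : CPBounded r R X)
    (hXj : CPBounded r R' Xj)
    (hTRIP : ∀ Y : EuclideanSpace ℝ ((i : Fin d) → Fin (n i)),
      CPBounded (3 * r) (max R R') Y →
        ‖ContinuousLinearMap.adjoint A (A Y) - Y‖ ≤ δ * ‖Y‖)
    (hδ : δ ≤ (1 / 2) * (2 : ℝ) ^ (-((nn : ℝ) ^ α)))
    (hz : ‖z‖ ≤ (2 : ℝ) ^ (-(0.5 : ℝ) * (nn : ℝ) ^ α) / (2 * ‖A‖))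
    (hiter : ‖Xj - X‖ ≤ 1) :
    ‖(Xj + ContinuousLinearMap.adjoint A (A X + z - A Xj)) - X‖ ^ 2
      ≤ (2 : ℝ) ^ (-((nn : ℝ) ^ α)) := by
  set t : ℝ := (nn : ℝ) ^ α with ht
  have ht0 : 0 ≤ t := Real.rpow_nonneg (by positivity) _
  set a : ℝ := (2 : ℝ) ^ (-t) with ha'
  set b : ℝ := (2 : ℝ) ^ (-(0.5 : ℝ) * t) with hb'
  have ha : 0 < a := Real.rpow_pos_of_pos two_pos _
  have hb : 0 < b := Real.rpow_pos_of_pos two_pos _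
  have hab : a ≤ b := by
    apply Real.rpow_le_rpow_of_exponent_le one_le_two
    nlinarith
  have hbb : b * b = a := by
    rw [hb', ha', ← Real.rpow_add two_pos]
    congr 1
    ring
  -- bound on the adjoint noise term
  have hAz : ‖ContinuousLinearMap.adjoint A z‖ ≤ b / 2 := by
    have h1 : ‖ContinuousLinearMap.adjoint A z‖ ≤ ‖A‖ * ‖z‖ := by
      calc ‖ContinuousLinearMap.adjoint A z‖
          ≤ ‖ContinuousLinearMap.adjoint A‖ * ‖z‖ :=
            ContinuousLinearMap.le_opNorm _ _
        _ = ‖A‖ * ‖z‖ := by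
              rw [LinearIsometryEquiv.norm_map ContinuousLinearMap.adjoint A]
    rcases eq_or_lt_of_le (norm_nonneg A) with hA0 | hA0
    · calc ‖ContinuousLinearMap.adjoint A z‖ ≤ ‖A‖ * ‖z‖ := h1
        _ = 0 := by rw [← hA0]; ring
        _ ≤ b / 2 := by positivity
    · calc ‖ContinuousLinearMap.adjoint A z‖ ≤ ‖A‖ * ‖z‖ := h1
        _ ≤ ‖A‖ * (b / (2 * ‖A‖)) := by
            apply mul_le_mul_of_nonneg_left hz (norm_nonneg A)
        _ = b / 2 := by field_simp
  -- key algebraic identity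
  have hW : (Xj + ContinuousLinearMap.adjoint A (A X + z - A Xj)) - X =
      -(ContinuousLinearMap.adjoint A (A (Xj - X)) - (Xj - X)) +
        ContinuousLinearMap.adjoint A z := by
    simp only [map_sub, map_add]
    abel
  have key : ‖(Xj + ContinuousLinearMap.adjoint A (A X + z - A Xj)) - X‖ ≤
      a / 2 + b / 2 := by
    rcases eq_or_ne (Xj - X) 0 with hY | hY
    · rw [hW, hY]
      simp only [map_zero, zero_sub, neg_neg, neg_zero, zero_add]
      calc ‖ContinuousLinearMap.adjoint A z‖ ≤ b / 2 := hAz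
        _ ≤ a / 2 + b / 2 := by linarith
    · -- main case: use the TRIP
      have hd : d ≠ 0 := by
        rintro rfl
        obtain ⟨x, _, hXeq⟩ := hX
        obtain ⟨y, _, hXjeq⟩ := hXj
        apply hY
        have : Xj = X := by
          rw [hXeq, hXjeq]
          refine Finset.sum_congr rfl fun k _ => ?_
          unfold outerD
          congr 1
        rw [this, sub_self]
      have hr : r ≠ 0 := by
        rintro rfl
        obtain ⟨x, _, hXeq⟩ := hX
        rw [hXeq] at hXnorm
        simp at hXnorm
      have hR0 : 0 ≤ max R R' := by
        obtain ⟨x, hx, _⟩ := hX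
        have i₀ : Fin d := ⟨0, Nat.pos_of_ne_zero hd⟩
        have k₀ : Fin r := ⟨0, Nat.pos_of_ne_zero hr⟩
        exact le_max_of_le_left ((norm_nonneg _).trans (hx k₀ i₀))
      have hcp : CPBounded (3 * r) (max R R') (Xj - X) := by
        have c1 : CPBounded r (max R R') Xj := cpb_mono (le_max_right R R') hXj
        have c2 : CPBounded r (max R R') (-X) :=
          cpb_neg hd (cpb_mono (le_max_left R R') hX)
        have c3 : CPBounded (d := d) (n := n) r (max R R') 0 := cpb_zero hd hR0
        have := cpb_add (cpb_add c1 c2) c3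
        have hr3 : r + r + r = 3 * r := by ring
        rw [hr3] at this
        simpa [sub_eq_add_neg] using this
      have hT := hTRIP _ hcp
      have hYpos : 0 < ‖Xj - X‖ := norm_pos_iff.mpr hY
      have hδ0 : 0 ≤ δ := by
        by_contra h
        push_neg at h
        have h1 : δ * ‖Xj - X‖ < 0 := mul_neg_of_neg_of_pos h hYpos
        have h2 : 0 ≤ ‖ContinuousLinearMap.adjoint A (A (Xj - X)) - (Xj - X)‖ :=
          norm_nonneg _
        linarith
      have hT2 : ‖ContinuousLinearMap.adjoint A (A (Xj - X)) - (Xj - X)‖ ≤ a / 2 := by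
        calc ‖ContinuousLinearMap.adjoint A (A (Xj - X)) - (Xj - X)‖
            ≤ δ * ‖Xj - X‖ := hT
          _ ≤ δ * 1 := mul_le_mul_of_nonneg_left hiter hδ0
          _ = δ := mul_one δ
          _ ≤ a / 2 := by rw [ha']; linarith
      rw [hW]
      calc ‖-(ContinuousLinearMap.adjoint A (A (Xj - X)) - (Xj - X)) +
            ContinuousLinearMap.adjoint A z‖
          ≤ ‖-(ContinuousLinearMap.adjoint A (A (Xj - X)) - (Xj - X))‖ +
            ‖ContinuousLinearMap.adjoint A z‖ := norm_add_le _ _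
        _ = ‖ContinuousLinearMap.adjoint A (A (Xj - X)) - (Xj - X)‖ +
            ‖ContinuousLinearMap.adjoint A z‖ := by rw [norm_neg]
        _ ≤ a / 2 + b / 2 := add_le_add hT2 hAz
  have hnn : (0 : ℝ) ≤ ‖(Xj + ContinuousLinearMap.adjoint A (A X + z - A Xj)) - X‖ :=
    norm_nonneg _
  calc ‖(Xj + ContinuousLinearMap.adjoint A (A X + z - A Xj)) - X‖ ^ 2
      ≤ (a / 2 + b / 2) ^ 2 := by
        apply pow_le_pow_left₀ hnn key
    _ ≤ b ^ 2 := by nlinarith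
    _ = a := by rw [sq, hbb]
end
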